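/- Let K ⊆ [0,1]^Γ be compact and suppose that for all real numbers p < q the family of disjoint pairs (A_α⁰, A_α¹)_{α∈Γ} does not contain an independent sequence, where A_α⁰ = {x ∈ K : x_α < p} and A_α¹ = {x ∈ K : x_α > q}. Then the family of coordinate projections {x ↦ x_α : α ∈ Γ}, viewed as a subset of the continuous functions on K, is eventually fragmented, uniformly bounded, and separates the points of K. -/

import Mathlib

open Set Function
open List

/-- A sequence of pairs of subsets `(A n, B n)` of a set `S` is *independent* if for every
`n` and every choice function `ε`, the intersection over `k < n` of `A k` (if `ε k = 0/false`)
or `B k` (if `ε k = 1/true`) is nonempty. -/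
def IsIndependentSeq {S : Type*} (A B : ℕ → Set S) : Prop :=
  ∀ (n : ℕ) (ε : Fin n → Bool),
    (⋂ k : Fin n, if ε k = true then B (k : ℕ) else A (k : ℕ)).Nonempty

/-- A family `F` of continuous real-valued functions on `X` is *fragmented* if for every
nonempty `A ⊆ X` and every `ε > 0` there is an open `O` with `O ∩ A` nonempty and
`f (O ∩ A)` of diameter smaller than `ε` for every `f ∈ F`. -/
def IsFragmentedFamily {X : Type*} [TopologicalSpace X] (F : Set C(X, ℝ)) : Prop :=
  ∀ A : Set X, A.Nonempty → ∀ ε : ℝ, ε > 0 → ∃ O : Set X, IsOpen O ∧ (O ∩ A).Nonempty ∧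
    ∀ f ∈ F, Metric.diam (f '' (O ∩ A)) < ε

/-- A family `F` is *eventually fragmented* if every sequence in `F` has a subsequence
which is a fragmented family on `X`. -/
def IsEventuallyFragmented {X : Type*} [TopologicalSpace X] (F : Set C(X, ℝ)) : Prop :=
  ∀ f : ℕ → C(X, ℝ), (∀ n, f n ∈ F) → ∃ φ : ℕ → ℕ, StrictMono φ ∧
    IsFragmentedFamily (Set.range fun k => f (φ k))

/-- The coordinate projection `x ↦ x_α` on a subset `K ⊆ [0,1]^Γ`, as a continuous
real-valued function on `K`. -/
def coordFun {Γ : Type*} (K : Set (Γ → unitInterval)) (α : Γ) : C(K, ℝ) :=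
  ⟨fun x => (x.1 α : ℝ),
    continuous_subtype_val.comp ((continuous_apply α).comp continuous_subtype_val)⟩

namespace RosNW

/-! ### List helpers -/

lemma exists_max {s : List ℕ} (hs : s ≠ []) : ∃ m ∈ s, ∀ a ∈ s, a ≤ m := by
  induction s with
  | nil => exact absurd rfl hs
  | cons a t ih =>
    rcases eq_or_ne t [] with rfl | ht
    · exact ⟨a, by simp⟩
    · obtain ⟨m, hm, hmax⟩ := ih ht
      rcases le_total a m with h | h
      · exact ⟨m, by simp [hm], by
          intro b hb; rcases List.mem_cons.1 hb with rfl | hb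
          · exact h
          · exact hmax b hb⟩
      · exact ⟨a, by simp, by
          intro b hb; rcases List.mem_cons.1 hb with rfl | hb
          · exact le_rfl
          · exact (hmax b hb).trans h⟩

lemma sublist_of_subset_sorted : ∀ {t s : List ℕ}, s.Pairwise (· < ·) → t.Pairwise (· < ·) →
    (∀ a ∈ s, a ∈ t) → s <+ t := by
  intro t
  induction t with
  | nil =>
    intro s _ _ hsub
    cases s with
    | nil => exact List.Sublist.refl _
    | cons a s => exact absurd (hsub a (by simp)) (by simp)
  | cons b t ih =>
    intro s hs ht hsub
    have htp : t.Pairwise (· < ·) := ht.of_cons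
    cases s with
    | nil => exact List.nil_sublist _
    | cons a s =>
      have hbt : ∀ x ∈ t, b < x := fun x hx => (List.pairwise_cons.1 ht).1 x hx
      rcases eq_or_ne a b with rfl | hab
      · have hsub' : ∀ x ∈ s, x ∈ t := by
          intro x hx
          have hax : a < x := (List.pairwise_cons.1 hs).1 x hx
          rcases List.mem_cons.1 (hsub x (by simp [hx])) with rfl | h
          · exact absurd hax (lt_irrefl _)
          · exact h
        exact List.Sublist.cons₂ _ (ih hs.of_cons htp hsub')
      · have hat : a ∈ t := by
          rcases List.mem_cons.1 (hsub a (by simp)) with rfl | h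
          · exact absurd rfl hab
          · exact h
        have hba : b < a := hbt a hat
        have hsub' : ∀ x ∈ a :: s, x ∈ t := by
          intro x hx
          have hax : a ≤ x := by
            rcases List.mem_cons.1 hx with rfl | h
            · exact le_rfl
            · exact le_of_lt ((List.pairwise_cons.1 hs).1 x h)
          rcases List.mem_cons.1 (hsub x hx) with rfl | h
          · exact absurd (lt_of_lt_of_le hba hax) (lt_irrefl _)
          · exact h
        exact List.Sublist.cons _ (ih hs htp hsub')

/-! ### Nash–Williams setting -/

variable (Bad : List ℕ → Prop)

/-- `s` is an initial segment of `P`. -/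
def InitSegL (s : List ℕ) (P : Set ℕ) : Prop :=
  (∀ a ∈ s, a ∈ P) ∧ ∀ b ∈ P, b ∉ s → ∀ a ∈ s, a < b

/-- `P` has a bad initial segment. -/
def InA (P : Set ℕ) : Prop := ∃ s : List ℕ, s.Pairwise (· < ·) ∧ Bad s ∧ InitSegL s P

/-- `P` is an infinite extension of `s` inside `M`. -/
def Ext (s : List ℕ) (M P : Set ℕ) : Prop :=
  P.Infinite ∧ InitSegL s P ∧ ∀ b ∈ P, b ∉ s → b ∈ M

def Accepts (M : Set ℕ) (s : List ℕ) : Prop := ∀ P, Ext s M P → InA Bad P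

def Rejects (M : Set ℕ) (s : List ℕ) : Prop :=
  ∀ M', M' ⊆ M → M'.Infinite → ¬ Accepts Bad M' s

lemma accepts_mono {M M' : Set ℕ} {s : List ℕ} (h : Accepts Bad M s) (hsub : M' ⊆ M) :
    Accepts Bad M' s := by
  intro P hP
  exact h P ⟨hP.1, hP.2.1, fun b hb hbs => hsub (hP.2.2 b hb hbs)⟩

lemma rejects_mono {M M' : Set ℕ} {s : List ℕ} (h : Rejects Bad M s) (hsub : M' ⊆ M) :
    Rejects Bad M' s := fun N hN hNi => h N (hN.trans hsub) hNi

lemma decide {M : Set ℕ} (hM : M.Infinite) (s : List ℕ) :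
    ∃ M', M' ⊆ M ∧ M'.Infinite ∧ (Accepts Bad M' s ∨ Rejects Bad M' s) := by
  by_cases h : Rejects Bad M s
  · exact ⟨M, subset_rfl, hM, Or.inr h⟩
  · simp only [Rejects, not_forall, not_not] at h
    obtain ⟨M', hsub, hinf, hacc⟩ := h
    exact ⟨M', hsub, hinf, Or.inl hacc⟩

lemma decideAll {M : Set ℕ} (hM : M.Infinite) (l : List (List ℕ)) :
    ∃ M', M' ⊆ M ∧ M'.Infinite ∧ ∀ s ∈ l, Accepts Bad M' s ∨ Rejects Bad M' s := by
  induction l with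
  | nil => exact ⟨M, subset_rfl, hM, by simp⟩
  | cons s l ih =>
    obtain ⟨M1, hsub1, hinf1, hdec1⟩ := ih
    obtain ⟨M2, hsub2, hinf2, hdec2⟩ := decide Bad hinf1 s
    refine ⟨M2, hsub2.trans hsub1, hinf2, ?_⟩
    intro t ht
    rcases List.mem_cons.1 ht with rfl | ht
    · exact hdec2
    · rcases hdec1 t ht with h | h
      · exact Or.inl (accepts_mono Bad h hsub2)
      · exact Or.inr (rejects_mono Bad h hsub2)

lemma accepts_transfer {M M'' : Set ℕ} {s : List ℕ} (h : Accepts Bad M'' s)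
    (hsub : ∀ b ∈ M, b ∉ s → (∀ a ∈ s, a < b) → b ∈ M'') : Accepts Bad M s := by
  intro P hP
  refine h P ⟨hP.1, hP.2.1, fun b hb hbs => ?_⟩
  exact hsub b (hP.2.2 b hb hbs) hbs (fun a ha => hP.2.1.2 b hb hbs a ha)

lemma rejects_transfer {M M'' : Set ℕ} {s : List ℕ} (h : Rejects Bad M'' s)
    (hsub : ∀ b ∈ M, b ∉ s → (∀ a ∈ s, a < b) → b ∈ M'') : Rejects Bad M s := by
  intro M1 hM1 hM1i hacc
  set M2 := {b | b ∈ M1 ∧ b ∉ s ∧ ∀ a ∈ s, a < b} with hM2def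
  rcases eq_or_ne s [] with rfl | hsne
  · have hM2 : M2 = M1 := by
      ext b; simp [hM2def]
    exact h M1 (by
      intro b hb
      exact hsub b (hM1 hb) (by simp) (by simp)) hM1i hacc
  · obtain ⟨m, _, hmax⟩ := exists_max hsne
    have hfin : (M1 \ M2).Finite := by
      apply (Set.finite_Iic m).subset
      intro b hb
      simp only [hM2def, Set.mem_diff, Set.mem_setOf_eq, not_and, not_forall] at hb
      obtain ⟨hb1, hb2⟩ := hb
      by_cases hbs : b ∈ s
      · exact hmax b hbs
      · obtain ⟨a, ha, hab⟩ := hb2 hb1 hbs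
        exact Set.mem_Iic.2 ((not_lt.1 hab).trans (hmax a ha))
    have hM2i : M2.Infinite := by
      have : M2 = M1 \ (M1 \ M2) := by
        ext b; simp only [hM2def, Set.mem_diff, Set.mem_setOf_eq]; tauto
      rw [this]
      exact hM1i.diff hfin
    have hM2sub : M2 ⊆ M'' := fun b hb => hsub b (hM1 hb.1) hb.2.1 hb.2.2
    exact h M2 hM2sub hM2i (accepts_mono Bad hacc (fun b hb => hb.1))


/-! ### Phase 1: the fusion construction -/

structure NWSt (Bad : List ℕ → Prop) (M : Set ℕ) : Type where
  F : List ℕ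
  M' : Set ℕ
  inf : M'.Infinite
  sub : M' ⊆ M
  chain : F.Pairwise (· < ·)
  lt : ∀ a ∈ F, ∀ b ∈ M', a < b
  mem : ∀ a ∈ F, a ∈ M
  dec : ∀ s ∈ F.sublists, Accepts Bad M' s ∨ Rejects Bad M' s

variable {M : Set ℕ}

noncomputable def pick (st : NWSt Bad M) : ℕ := st.inf.nonempty.choose

lemma pick_mem (st : NWSt Bad M) : pick Bad st ∈ st.M' := st.inf.nonempty.choose_spec

lemma step_ex (st : NWSt Bad M) : ∃ st' : NWSt Bad M,
    st'.F = st.F ++ [pick Bad st] ∧ st'.M' ⊆ st.M' ∩ Set.Ioi (pick Bad st) := by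
  set n := pick Bad st with hn
  have hinf : (st.M' ∩ Set.Ioi n).Infinite := by
    refine ((st.inf.diff (Set.finite_Iic n)).mono ?_)
    intro x hx
    exact ⟨hx.1, by simpa using hx.2⟩
  obtain ⟨M2, hsub2, hinf2, hdec2⟩ := decideAll Bad hinf ((st.F ++ [n]).sublists)
  have hM2M' : M2 ⊆ st.M' := hsub2.trans (Set.inter_subset_left)
  have hM2Ioi : M2 ⊆ Set.Ioi n := hsub2.trans (Set.inter_subset_right)
  refine ⟨⟨st.F ++ [n], M2, hinf2, hM2M'.trans st.sub, ?_, ?_, ?_, hdec2⟩, rfl, hsub2⟩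
  · rw [List.pairwise_append]
    refine ⟨st.chain, by simp, ?_⟩
    intro a ha b hb
    rw [List.mem_singleton] at hb
    subst hb
    exact st.lt a ha n (pick_mem Bad st)
  · intro a ha b hb
    rcases List.mem_append.1 ha with ha | ha
    · exact st.lt a ha b (hM2M' hb)
    · rw [List.mem_singleton] at ha
      subst ha
      exact hM2Ioi hb
  · intro a ha
    rcases List.mem_append.1 ha with ha | ha
    · exact st.mem a ha
    · rw [List.mem_singleton] at ha
      subst ha
      exact st.sub (pick_mem Bad st)

noncomputable def stepSt (st : NWSt Bad M) : NWSt Bad M := (step_ex Bad st).choose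

lemma stepSt_F (st : NWSt Bad M) : (stepSt Bad st).F = st.F ++ [pick Bad st] :=
  (step_ex Bad st).choose_spec.1

lemma stepSt_M' (st : NWSt Bad M) : (stepSt Bad st).M' ⊆ st.M' ∩ Set.Ioi (pick Bad st) :=
  (step_ex Bad st).choose_spec.2

variable (st0 : NWSt Bad M)

noncomputable def iterSt (k : ℕ) : NWSt Bad M := (stepSt Bad)^[k] st0

noncomputable def nu (k : ℕ) : ℕ := pick Bad (iterSt Bad st0 k)

lemma iterSt_succ (k : ℕ) : iterSt Bad st0 (k+1) = stepSt Bad (iterSt Bad st0 k) :=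
  Function.iterate_succ_apply' _ _ _

lemma iterSt_F_succ (k : ℕ) :
    (iterSt Bad st0 (k+1)).F = (iterSt Bad st0 k).F ++ [nu Bad st0 k] := by
  rw [iterSt_succ, stepSt_F]; rfl

lemma iterSt_M'_succ (k : ℕ) :
    (iterSt Bad st0 (k+1)).M' ⊆ (iterSt Bad st0 k).M' ∩ Set.Ioi (nu Bad st0 k) := by
  rw [iterSt_succ]; exact stepSt_M' Bad _

lemma nu_mem (k : ℕ) : nu Bad st0 k ∈ (iterSt Bad st0 k).M' := pick_mem Bad _

lemma iterSt_M'_mono : ∀ {j k : ℕ}, j ≤ k → (iterSt Bad st0 k).M' ⊆ (iterSt Bad st0 j).M' := by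
  intro j k hjk
  induction k with
  | zero => rw [Nat.le_zero.1 hjk]
  | succ k ih =>
    rcases Nat.lt_succ_iff_lt_or_eq.1 (Nat.lt_succ_of_le hjk) with h | rfl
    · exact ((iterSt_M'_succ Bad st0 k).trans Set.inter_subset_left).trans (ih (Nat.lt_succ_iff.1 h))
    · exact subset_rfl

lemma nu_mem_of_le {j k : ℕ} (hjk : j ≤ k) : nu Bad st0 k ∈ (iterSt Bad st0 j).M' :=
  iterSt_M'_mono Bad st0 hjk (nu_mem Bad st0 k)

lemma nu_strictMono : StrictMono (nu Bad st0) := by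
  apply strictMono_nat_of_lt_succ
  intro k
  have h := (iterSt_M'_succ Bad st0 k).trans Set.inter_subset_right (nu_mem Bad st0 (k+1))
  exact h

lemma iterSt_F_eq (hF0 : st0.F = []) (k : ℕ) :
    (iterSt Bad st0 k).F = (List.range k).map (nu Bad st0) := by
  induction k with
  | zero => simpa [iterSt] using hF0
  | succ k ih =>
    rw [iterSt_F_succ, ih, List.range_succ, List.map_append]
    rfl

lemma nu_mem_M (k : ℕ) : nu Bad st0 k ∈ M := (iterSt Bad st0 k).sub (nu_mem Bad st0 k)

/-- Every sorted finite subset of `range nu` is decided by `range nu`. -/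
lemma range_nu_decided (hF0 : st0.F = []) (s : List ℕ) (hs : s.Pairwise (· < ·))
    (hmem : ∀ a ∈ s, a ∈ Set.range (nu Bad st0)) :
    Accepts Bad (Set.range (nu Bad st0)) s ∨ Rejects Bad (Set.range (nu Bad st0)) s := by
  set N := Set.range (nu Bad st0) with hN
  rcases eq_or_ne s [] with rfl | hsne
  · -- use stage 0
    have hdec := st0.dec [] (by simp [hF0])
    have hsub : ∀ b ∈ N, b ∉ ([] : List ℕ) → (∀ a ∈ ([] : List ℕ), a < b) → b ∈ st0.M' := by
      rintro b ⟨j, rfl⟩ - -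
      have := nu_mem_of_le Bad st0 (Nat.zero_le j)
      simpa [iterSt] using this
    have hdec' : Accepts Bad st0.M' [] ∨ Rejects Bad st0.M' [] := hdec
    rcases hdec' with h | h
    · exact Or.inl (accepts_transfer Bad h hsub)
    · exact Or.inr (rejects_transfer Bad h hsub)
  · obtain ⟨m, hms, hmax⟩ := exists_max hsne
    obtain ⟨i, hi⟩ := hmem m hms
    -- s is a sublist of F (iter (i+1))
    have hsubF : s <+ (iterSt Bad st0 (i+1)).F := by
      rw [iterSt_F_eq Bad st0 hF0]
      apply sublist_of_subset_sorted hs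
      · exact List.Pairwise.map _ (fun {a b} hab => nu_strictMono Bad st0 hab) List.pairwise_lt_range
      · intro a ha
        obtain ⟨j, hj⟩ := hmem a ha
        have hji : j ≤ i := by
          rw [← (nu_strictMono Bad st0).le_iff_le]
          rw [hi, hj]
          exact hmax a ha
        rw [List.mem_map]
        exact ⟨j, List.mem_range.2 (Nat.lt_succ_of_le hji), hj⟩
    have hdec := (iterSt Bad st0 (i+1)).dec s (List.mem_sublists.2 hsubF)
    have hsub : ∀ b ∈ N, b ∉ s → (∀ a ∈ s, a < b) → b ∈ (iterSt Bad st0 (i+1)).M' := by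
      rintro b ⟨j, rfl⟩ _ hlt
      have : nu Bad st0 i < nu Bad st0 j := by
        rw [hi]; exact hlt m hms
      have hij : i + 1 ≤ j := (nu_strictMono Bad st0).lt_iff_lt.1 this
      exact nu_mem_of_le Bad st0 hij
    rcases hdec with h | h
    · exact Or.inl (accepts_transfer Bad h hsub)
    · exact Or.inr (rejects_transfer Bad h hsub)


/-! ### Phase 2: building the rejecting set -/

section Phase2

variable {N : Set ℕ}

/-- If `N` rejects `s`, the set of one-step extensions accepted by `N` is finite. -/
lemma le_foldr_max : ∀ (l : List ℕ), ∀ a ∈ l, a ≤ l.foldr max 0 := by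
  intro l
  induction l with
  | nil => simp
  | cons b t ih =>
    intro a ha
    rcases List.mem_cons.1 ha with rfl | ha
    · exact le_max_left _ _
    · exact le_trans (ih a ha) (le_max_right _ _)

/-- If `N` rejects `s`, the set of one-step extensions accepted by `N` is finite. -/
lemma accFin {s : List ℕ} (hrej : Rejects Bad N s) :
    {n | n ∈ N ∧ (∀ a ∈ s, a < n) ∧ Accepts Bad N (s ++ [n])}.Finite := by
  by_contra hinf
  have hinf : {n | n ∈ N ∧ (∀ a ∈ s, a < n) ∧ Accepts Bad N (s ++ [n])}.Infinite := hinf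
  set A := {n | n ∈ N ∧ (∀ a ∈ s, a < n) ∧ Accepts Bad N (s ++ [n])} with hA
  have hAN : A ⊆ N := fun n hn => hn.1
  refine hrej A hAN hinf ?_
  intro P hP
  obtain ⟨hPinf, hPinit, hPnew⟩ := hP
  have hTne : {b | b ∈ P ∧ b ∉ s}.Nonempty := by
    have : (P \ {b | b ∈ s}).Infinite := hPinf.diff s.finite_toSet
    obtain ⟨b, hb⟩ := this.nonempty
    exact ⟨b, hb.1, hb.2⟩
  set n := sInf {b | b ∈ P ∧ b ∉ s} with hn
  have hnmem : n ∈ P ∧ n ∉ s := Nat.sInf_mem hTne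
  have hnA : n ∈ A := hPnew n hnmem.1 hnmem.2
  have hacc : Accepts Bad N (s ++ [n]) := hnA.2.2
  refine hacc P ⟨hPinf, ⟨?_, ?_⟩, ?_⟩
  · intro a ha
    rcases List.mem_append.1 ha with ha | ha
    · exact hPinit.1 a ha
    · rw [List.mem_singleton] at ha; subst ha; exact hnmem.1
  · intro b hb hbs a ha
    have hbs' : b ∉ s := fun hc => hbs (List.mem_append.2 (Or.inl hc))
    have hbn : b ≠ n := fun hc => hbs (List.mem_append.2 (Or.inr (by simp [hc])))
    rcases List.mem_append.1 ha with ha | ha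
    · exact hPinit.2 b hb hbs' a ha
    · rw [List.mem_singleton] at ha; subst ha
      exact lt_of_le_of_ne (Nat.sInf_le ⟨hb, hbs'⟩) (Ne.symm hbn)
  · intro b hb hbs
    have hbs' : b ∉ s := fun hc => hbs (List.mem_append.2 (Or.inl hc))
    exact hAN (hPnew b hb hbs')

structure NWSt2 (Bad : List ℕ → Prop) (N : Set ℕ) : Type where
  G : List ℕ
  chain : G.Pairwise (· < ·)
  mem : ∀ a ∈ G, a ∈ N
  rej : ∀ s ∈ G.sublists, Rejects Bad N s

lemma step2_ex (hNinf : N.Infinite)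
    (hNdec : ∀ s : List ℕ, s.Pairwise (· < ·) → (∀ a ∈ s, a ∈ N) →
      Accepts Bad N s ∨ Rejects Bad N s)
    (st : NWSt2 Bad N) : ∃ st' : NWSt2 Bad N,
    ∃ m : ℕ, st'.G = st.G ++ [m] ∧ ∀ a ∈ st.G, a < m := by
  classical
  -- the union of all accept-extension sets, plus a bound on G
  set Avoid : Set ℕ := (⋃ s ∈ {t | t ∈ st.G.sublists}, {n | n ∈ N ∧ (∀ a ∈ s, a < n) ∧ Accepts Bad N (s ++ [n])}) with hAvoid
  have hAvoidFin : Avoid.Finite := by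
    apply Set.Finite.biUnion (st.G.sublists.finite_toSet)
    intro s hs
    exact accFin Bad (st.rej s hs)
  set bndG : ℕ := st.G.foldr max 0 with hbnd
  have hGbnd : ∀ a ∈ st.G, a ≤ bndG := le_foldr_max st.G
  have hbig : (N \ (Avoid ∪ Set.Iic bndG)).Infinite :=
    hNinf.diff (hAvoidFin.union (Set.finite_Iic _))
  obtain ⟨m, hmN, hmav⟩ := hbig.nonempty
  have hmgt : ∀ a ∈ st.G, a < m := by
    intro a ha
    have : ¬ m ≤ bndG := fun hc => hmav (Or.inr hc)
    exact lt_of_le_of_lt (hGbnd a ha) (not_le.1 this)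
  have hmAvoid : m ∉ Avoid := fun hc => hmav (Or.inl hc)
  refine ⟨⟨st.G ++ [m], ?_, ?_, ?_⟩, m, rfl, hmgt⟩
  · rw [List.pairwise_append]
    exact ⟨st.chain, by simp, fun a ha b hb => by
      rw [List.mem_singleton] at hb; subst hb; exact hmgt a ha⟩
  · intro a ha
    rcases List.mem_append.1 ha with ha | ha
    · exact st.mem a ha
    · rw [List.mem_singleton] at ha; subst ha; exact hmN
  · intro s hs
    rw [List.mem_sublists, List.sublist_append_iff] at hs
    obtain ⟨s1, s2, rfl, hs1, hs2⟩ := hs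
    rcases (List.sublist_singleton).1 hs2 with rfl | rfl
    · rw [List.append_nil]
      exact st.rej s1 (List.mem_sublists.2 hs1)
    · -- s = s1 ++ [m]
      have hs1mem : ∀ a ∈ s1, a ∈ N := fun a ha => st.mem a (hs1.subset ha)
      have hs1chain : s1.Pairwise (· < ·) := st.chain.sublist hs1
      have hs1lt : ∀ a ∈ s1, a < m := fun a ha => hmgt a (hs1.subset ha)
      have hdec := hNdec (s1 ++ [m]) (by
        rw [List.pairwise_append]
        exact ⟨hs1chain, by simp, fun a ha b hb => by
          rw [List.mem_singleton] at hb; subst hb; exact hs1lt a ha⟩) (by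
        intro a ha
        rcases List.mem_append.1 ha with ha | ha
        · exact hs1mem a ha
        · rw [List.mem_singleton] at ha; subst ha; exact hmN)
      rcases hdec with h | h
      · exfalso
        apply hmAvoid
        rw [hAvoid]
        refine Set.mem_biUnion (List.mem_sublists.2 hs1) ⟨hmN, hs1lt, h⟩
      · exact h

end Phase2


section Phase2Iter

variable {N : Set ℕ}
variable (hNinf : N.Infinite)
variable (hNdec : ∀ s : List ℕ, s.Pairwise (· < ·) → (∀ a ∈ s, a ∈ N) →
  Accepts Bad N s ∨ Rejects Bad N s)
variable (st20 : NWSt2 Bad N)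

noncomputable def step2St (st : NWSt2 Bad N) : NWSt2 Bad N :=
  (step2_ex Bad hNinf hNdec st).choose

noncomputable def mu2 (st : NWSt2 Bad N) : ℕ :=
  (step2_ex Bad hNinf hNdec st).choose_spec.choose

lemma step2St_G (st : NWSt2 Bad N) :
    (step2St Bad hNinf hNdec st).G = st.G ++ [mu2 Bad hNinf hNdec st] :=
  (step2_ex Bad hNinf hNdec st).choose_spec.choose_spec.1

lemma mu2_gt (st : NWSt2 Bad N) : ∀ a ∈ st.G, a < mu2 Bad hNinf hNdec st :=
  (step2_ex Bad hNinf hNdec st).choose_spec.choose_spec.2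

noncomputable def iter2 (k : ℕ) : NWSt2 Bad N := (step2St Bad hNinf hNdec)^[k] st20

noncomputable def mu (k : ℕ) : ℕ := mu2 Bad hNinf hNdec (iter2 Bad hNinf hNdec st20 k)

lemma iter2_G_succ (k : ℕ) :
    (iter2 Bad hNinf hNdec st20 (k+1)).G =
      (iter2 Bad hNinf hNdec st20 k).G ++ [mu Bad hNinf hNdec st20 k] := by
  rw [iter2, Function.iterate_succ_apply', step2St_G]; rfl

lemma iter2_G_eq (hG0 : st20.G = []) (k : ℕ) :
    (iter2 Bad hNinf hNdec st20 k).G = (List.range k).map (mu Bad hNinf hNdec st20) := by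
  induction k with
  | zero => simpa [iter2] using hG0
  | succ k ih =>
    rw [iter2_G_succ, ih, List.range_succ, List.map_append]
    rfl

lemma mu_strictMono (hG0 : st20.G = []) : StrictMono (mu Bad hNinf hNdec st20) := by
  apply strictMono_nat_of_lt_succ
  intro k
  apply mu2_gt Bad hNinf hNdec (iter2 Bad hNinf hNdec st20 (k+1))
  rw [iter2_G_eq Bad hNinf hNdec st20 hG0 (k+1), List.mem_map]
  exact ⟨k, List.mem_range.2 (Nat.lt_succ_self k), rfl⟩

lemma mu_mem_N (k : ℕ) : mu Bad hNinf hNdec st20 k ∈ N := by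
  have h := iter2_G_succ Bad hNinf hNdec st20 k
  apply (iter2 Bad hNinf hNdec st20 (k+1)).mem
  rw [h]
  simp

lemma mu_rejects (hG0 : st20.G = []) (s : List ℕ) (hs : s.Pairwise (· < ·))
    (hmem : ∀ a ∈ s, a ∈ Set.range (mu Bad hNinf hNdec st20)) : Rejects Bad N s := by
  rcases eq_or_ne s [] with rfl | hsne
  · have := st20.rej [] (by simp [hG0])
    exact this
  · obtain ⟨m, hms, hmax⟩ := exists_max hsne
    obtain ⟨i, hi⟩ := hmem m hms
    have hsubG : s <+ (iter2 Bad hNinf hNdec st20 (i+1)).G := by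
      rw [iter2_G_eq Bad hNinf hNdec st20 hG0]
      apply sublist_of_subset_sorted hs
      · exact List.Pairwise.map _
          (fun {a b} hab => mu_strictMono Bad hNinf hNdec st20 hG0 hab)
          List.pairwise_lt_range
      · intro a ha
        obtain ⟨j, hj⟩ := hmem a ha
        have hji : j ≤ i := by
          rw [← (mu_strictMono Bad hNinf hNdec st20 hG0).le_iff_le, hi, hj]
          exact hmax a ha
        rw [List.mem_map]
        exact ⟨j, List.mem_range.2 (Nat.lt_succ_of_le hji), hj⟩
    exact (iter2 Bad hNinf hNdec st20 (i+1)).rej s (List.mem_sublists.2 hsubG)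

end Phase2Iter

/-! ### The Nash–Williams theorem -/

theorem nashWilliams (M : Set ℕ) (hM : M.Infinite) :
    (∃ N, N ⊆ M ∧ N.Infinite ∧ ∀ P, P ⊆ N → P.Infinite → InA Bad P) ∨
    (∃ N, N ⊆ M ∧ N.Infinite ∧ ∀ s : List ℕ, s.Pairwise (· < ·) →
      (∀ a ∈ s, a ∈ N) → ¬ Bad s) := by
  classical
  obtain ⟨M0, hsub0, hinf0, hdec0⟩ := decideAll Bad hM [[]]
  set st0 : NWSt Bad M := ⟨[], M0, hinf0, hsub0, by simp, by simp, by simp, by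
    intro s hs
    simp only [List.sublists_nil, List.mem_singleton] at hs
    subst hs
    exact hdec0 [] (by simp)⟩ with hst0
  set N1 := Set.range (nu Bad st0) with hN1
  have hN1inf : N1.Infinite :=
    Set.infinite_range_of_injective (nu_strictMono Bad st0).injective
  have hN1M : N1 ⊆ M := by rintro b ⟨j, rfl⟩; exact nu_mem_M Bad st0 j
  have hdecided := range_nu_decided Bad st0 rfl
  by_cases hacc : Accepts Bad N1 []
  · left
    refine ⟨N1, hN1M, hN1inf, fun P hP hPinf => ?_⟩
    exact hacc P ⟨hPinf, ⟨by simp, by simp⟩, fun b hb _ => hP hb⟩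
  · right
    have hrejnil : Rejects Bad N1 [] :=
      (hdecided [] (by simp) (by simp)).resolve_left hacc
    set st20 : NWSt2 Bad N1 := ⟨[], by simp, by simp, by
      intro s hs
      simp only [List.sublists_nil, List.mem_singleton] at hs
      subst hs
      exact hrejnil⟩ with hst20
    set m := mu Bad hN1inf hdecided st20 with hm
    refine ⟨Set.range m, ?_, Set.infinite_range_of_injective
      (mu_strictMono Bad hN1inf hdecided st20 rfl).injective, ?_⟩
    · rintro b ⟨j, rfl⟩; exact hN1M (mu_mem_N Bad hN1inf hdecided st20 j)
    · intro s hs hmem hbad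
      have hrej : Rejects Bad N1 s := mu_rejects Bad hN1inf hdecided st20 rfl s hs hmem
      refine hrej N1 subset_rfl hN1inf ?_
      intro P hP
      exact ⟨s, hs, hbad, hP.2.1⟩


/-! ### Rosenthal's lemma -/

section Rosenthal

variable {X : Type*}

def altFrom (C D : ℕ → Set X) : ℕ → List ℕ → Set X
  | _, [] => Set.univ
  | i, n :: l => (if Even i then C n else D n) ∩ altFrom C D (i+1) l

lemma ite_apply_set (C D : ℕ → Set X) (i : ℕ) (a : ℕ) :
    (if Even i then C else D) a = if Even i then C a else D a := by
  split <;> rfl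

lemma mem_altFrom_of (C D : ℕ → Set X) (x : X) :
    ∀ (l : List ℕ) (i : ℕ),
      (∀ j (hj : j < l.length), x ∈ (if Even (i+j) then C else D) (l.get ⟨j, hj⟩)) →
      x ∈ altFrom C D i l := by
  intro l
  induction l with
  | nil => intro i _; exact Set.mem_univ x
  | cons a t ih =>
    intro i hmem
    constructor
    · have := hmem 0 (by simp)
      simp only [Nat.add_zero, ite_apply_set] at this
      simpa using this
    · apply ih (i+1)
      intro j hj
      have := hmem (j+1) (by simpa using Nat.succ_lt_succ hj)
      have heq : i + 1 + j = i + (j + 1) := by omega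
      rw [heq]
      simpa using this

lemma altFrom_subset (C D : ℕ → Set X) (x : X) :
    ∀ (l : List ℕ) (i : ℕ), x ∈ altFrom C D i l →
      ∀ j (hj : j < l.length), x ∈ (if Even (i+j) then C else D) (l.get ⟨j, hj⟩) := by
  intro l
  induction l with
  | nil => intro i _ j hj; simp at hj
  | cons a t ih =>
    intro i hx j hj
    obtain ⟨hx1, hx2⟩ := hx
    cases j with
    | zero =>
      simp only [Nat.add_zero, ite_apply_set]
      simpa using hx1
    | succ j =>
      have := ih (i+1) hx2 j (by simpa using Nat.lt_of_succ_lt_succ hj)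
      have heq : i + 1 + j = i + (j + 1) := by omega
      rw [heq] at this
      simpa using this

lemma initSegL_range_eq {ψ : ℕ → ℕ} (hψ : StrictMono ψ) :
    ∀ {s : List ℕ}, s.Pairwise (· < ·) → InitSegL s (Set.range ψ) →
      s = (List.range s.length).map ψ := by
  intro s
  induction s generalizing ψ with
  | nil => intro _ _; simp
  | cons a t ih =>
    intro hpair hinit
    obtain ⟨hsub, hgt⟩ := hinit
    obtain ⟨j, hj⟩ := hsub a List.mem_cons_self
    have hhead : ∀ c ∈ t, a < c := (List.pairwise_cons.1 hpair).1
    have ha0 : ψ 0 = a := by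
      by_contra hne
      have h0mem : ψ 0 ∉ a :: t := by
        intro hmem
        have hge : a ≤ ψ 0 := by
          rcases List.mem_cons.1 hmem with h | h
          · exact le_of_eq h.symm
          · exact le_of_lt (hhead _ h)
        have hj0 : j ≠ 0 := fun hc => hne (by rw [hc] at hj; exact hj)
        have : ψ 0 < ψ j := hψ (Nat.pos_of_ne_zero hj0)
        rw [hj] at this
        exact absurd this (not_lt.2 hge)
      have := hgt (ψ 0) ⟨0, rfl⟩ h0mem a List.mem_cons_self
      have hle : ψ 0 ≤ ψ j := hψ.monotone (Nat.zero_le j)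
      rw [hj] at hle
      exact absurd this (not_lt.2 hle)
    set ψ' : ℕ → ℕ := fun i => ψ (i+1) with hψ'def
    have hψ' : StrictMono ψ' := fun a b hab => hψ (by omega)
    have hinit' : InitSegL t (Set.range ψ') := by
      constructor
      · intro b hb
        obtain ⟨j', hj'⟩ := hsub b (List.mem_cons_of_mem a hb)
        have hj'0 : j' ≠ 0 := by
          intro hc
          rw [hc, ha0] at hj'
          exact absurd (hj' ▸ hhead b hb) (lt_irrefl _)
        obtain ⟨j'', rfl⟩ := Nat.exists_eq_succ_of_ne_zero hj'0
        exact ⟨j'', hj'⟩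
      · rintro b ⟨j'', rfl⟩ hbt c hc
        have hbne : ψ' j'' ∉ a :: t := by
          intro hmem
          rcases List.mem_cons.1 hmem with h | h
          · rw [← ha0] at h
            exact absurd (hψ.injective h) (by omega)
          · exact hbt h
        exact hgt (ψ' j'') ⟨j''+1, rfl⟩ hbne c (List.mem_cons_of_mem a hc)
    have ht := ih hψ' (List.pairwise_cons.1 hpair).2 hinit'
    have : (List.range (t.length + 1)).map ψ = a :: (List.range t.length).map ψ' := by
      rw [List.range_succ_eq_map, List.map_cons, ha0, List.map_map]
      rfl
    simp only [List.length_cons, this]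
    rw [← ht]

end Rosenthal


end RosNW

namespace RosNW

theorem rosenthal {X : Type*} (C D : ℕ → Set X)
    (h : ¬ ∃ ψ : ℕ → ℕ, StrictMono ψ ∧
      IsIndependentSeq (fun k => C (ψ k)) (fun k => D (ψ k))) :
    ∃ φ : ℕ → ℕ, StrictMono φ ∧
      ∀ x : X, ¬ ((∃ᶠ k in Filter.atTop, x ∈ C (φ k)) ∧
                   (∃ᶠ k in Filter.atTop, x ∈ D (φ k))) := by
  classical
  set Bad : List ℕ → Prop := fun s => altFrom C D 0 s = ∅ with hBad
  rcases nashWilliams Bad Set.univ Set.infinite_univ with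
    ⟨N, -, hNinf, hleft⟩ | ⟨N, -, hNinf, hright⟩
  · -- accept side : no point alternates infinitely often
    have hNinf' : (setOf fun n => n ∈ N).Infinite := hNinf
    set φ : ℕ → ℕ := Nat.nth (fun n => n ∈ N) with hφ
    have hφmono : StrictMono φ := Nat.nth_strictMono hNinf'
    have hφmem : ∀ k, φ k ∈ N := fun k => Nat.nth_mem_of_infinite hNinf' k
    refine ⟨φ, hφmono, ?_⟩
    rintro x ⟨hC, hD⟩
    have hC' := Filter.frequently_atTop.1 hC
    have hD' := Filter.frequently_atTop.1 hD
    have hsel : ∀ (i a : ℕ), ∃ b, a ≤ b ∧ x ∈ (if Even i then C else D) (φ b) := by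
      intro i a
      by_cases hi : Even i
      · obtain ⟨b, hb1, hb2⟩ := hC' a
        exact ⟨b, hb1, by simpa [hi] using hb2⟩
      · obtain ⟨b, hb1, hb2⟩ := hD' a
        exact ⟨b, hb1, by simpa [hi] using hb2⟩
    choose sel hsel1 hsel2 using hsel
    set k : ℕ → ℕ := fun i => Nat.rec (sel 0 0) (fun i prev => sel (i+1) (prev+1)) i with hk
    have hksucc : ∀ i, k (i+1) = sel (i+1) (k i + 1) := fun i => rfl
    have hkmono : StrictMono k := by
      apply strictMono_nat_of_lt_succ
      intro i
      have := hsel1 (i+1) (k i + 1)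
      rw [← hksucc i] at this
      omega
    have hkmem : ∀ i, x ∈ (if Even i then C else D) (φ (k i)) := by
      intro i
      cases i with
      | zero => exact hsel2 0 0
      | succ i => exact hsel2 (i+1) (k i + 1)
    set ψ : ℕ → ℕ := φ ∘ k with hψ
    have hψmono : StrictMono ψ := hφmono.comp hkmono
    have hInA := hleft (Set.range ψ) (by rintro b ⟨i, rfl⟩; exact hφmem (k i))
      (Set.infinite_range_of_injective hψmono.injective)
    obtain ⟨s, hspair, hsbad, hsinit⟩ := hInA
    have hseq : s = (List.range s.length).map ψ := initSegL_range_eq hψmono hspair hsinit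
    have hxmem : x ∈ altFrom C D 0 ((List.range s.length).map ψ) := by
      apply mem_altFrom_of
      intro j hj
      have hget : ((List.range s.length).map ψ).get ⟨j, hj⟩ = ψ j := by
        simp at hj ⊢
      rw [hget]
      have := hkmem j
      simpa [ite_apply_set, hψ] using this
    rw [hBad] at hsbad
    rw [hseq] at hsbad
    rw [hsbad] at hxmem
    exact hxmem
  · -- reject side : an independent sequence exists, contradiction
    exfalso
    apply h
    have hNinf' : (setOf fun n => n ∈ N).Infinite := hNinf
    set φ : ℕ → ℕ := Nat.nth (fun n => n ∈ N) with hφ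
    have hφmono : StrictMono φ := Nat.nth_strictMono hNinf'
    have hφmem : ∀ k, φ k ∈ N := fun k => Nat.nth_mem_of_infinite hNinf' k
    refine ⟨fun k => φ (3*k+1), hφmono.comp (fun a b hab => by omega), ?_⟩
    intro n ε
    set b : ℕ → Bool := fun k => if hk : k < n then ε ⟨k, hk⟩ else false with hb
    set inner : ℕ → ℕ := fun j => 3 * (j / 2) + (if b (j / 2) then j % 2 else j % 2 + 1)
      with hinner
    have hinnermono : StrictMono inner := by
      apply strictMono_nat_of_lt_succ
      intro j
      rcases Nat.even_or_odd j with he | ho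
      · obtain ⟨a, rfl⟩ := he
        have h1 : (a + a) / 2 = a := by omega
        have h2 : (a + a + 1) / 2 = a := by omega
        simp only [hinner, h1, h2]
        by_cases hba : b a <;> simp [hba] <;> omega
      · obtain ⟨a, rfl⟩ := ho
        have h1 : (2*a + 1) / 2 = a := by omega
        have h2 : (2*a + 1 + 1) / 2 = a + 1 := by omega
        simp only [hinner, h1, h2]
        by_cases hba : b a <;> by_cases hba' : b (a+1) <;> simp [hba, hba'] <;> omega
    set l : List ℕ := (List.range (2*n)).map (fun j => φ (inner j)) with hl
    have hlpair : l.Pairwise (· < ·) := by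
      rw [hl]
      exact List.Pairwise.map _ (fun {p q} hpq => hφmono (hinnermono hpq))
        List.pairwise_lt_range
    have hlmem : ∀ a ∈ l, a ∈ N := by
      rw [hl]
      intro a ha
      rw [List.mem_map] at ha
      obtain ⟨j, -, rfl⟩ := ha
      exact hφmem _
    have hnotbad : ¬ Bad l := hright l hlpair hlmem
    rw [hBad] at hnotbad
    obtain ⟨x, hx⟩ := Set.nonempty_iff_ne_empty.2 hnotbad
    refine ⟨x, ?_⟩
    rw [Set.mem_iInter]
    intro kk
    have hkn : (kk : ℕ) < n := kk.isLt
    have hbk : b (kk : ℕ) = ε kk := by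
      rw [hb]
      simp [hkn]
    by_cases hε : ε kk = true
    · -- use position 2k+1 (odd) : D
      rw [if_pos hε]
      have hj : 2*(kk : ℕ)+1 < l.length := by
        rw [hl]; simp only [List.length_map, List.length_range]; omega
      have := altFrom_subset C D x l 0 hx (2*(kk : ℕ)+1) hj
      simp only [hl, List.get_eq_getElem, List.getElem_map, List.getElem_range] at this
      have hinnerval : inner (2*(kk : ℕ)+1) = 3*(kk : ℕ)+1 := by
        have h1 : (2*(kk : ℕ) + 1) / 2 = (kk : ℕ) := by omega
        have h2 : (2*(kk : ℕ) + 1) % 2 = 1 := by omega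
        simp only [hinner, h1, h2, hbk, hε]
        simp
      have hodd : ¬ Even (0 + (2*(kk : ℕ)+1)) := by
        rw [Nat.zero_add, Nat.even_iff]
        omega
      rw [ite_apply_set, if_neg hodd, hinnerval] at this
      exact this
    · -- use position 2k (even) : C
      rw [if_neg hε]
      have hbkf : b (kk : ℕ) = false := by rw [hbk]; simpa using hε
      have hj : 2*(kk : ℕ) < l.length := by
        rw [hl]; simp only [List.length_map, List.length_range]; omega
      have := altFrom_subset C D x l 0 hx (2*(kk : ℕ)) hj
      simp only [hl, List.get_eq_getElem, List.getElem_map, List.getElem_range] at this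
      have hinnerval : inner (2*(kk : ℕ)) = 3*(kk : ℕ)+1 := by
        have h1 : (2*(kk : ℕ)) / 2 = (kk : ℕ) := by omega
        have h2 : (2*(kk : ℕ)) % 2 = 0 := by omega
        simp only [hinner, h1, h2, hbkf]
        simp
      have heven : Even (0 + 2*(kk : ℕ)) := by
        rw [Nat.zero_add, Nat.even_iff]
        omega
      rw [ite_apply_set, if_pos heven, hinnerval] at this
      exact this


/-! ### Diagonalization over rational pairs -/

lemma freq_comp {P : ℕ → Prop} {ψ : ℕ → ℕ} (hψ : StrictMono ψ)
    (h : ∃ᶠ k in Filter.atTop, P (ψ k)) : ∃ᶠ m in Filter.atTop, P m := by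
  rw [Filter.frequently_atTop] at h ⊢
  intro a
  obtain ⟨k, hk, hPk⟩ := h a
  exact ⟨ψ k, hk.trans hψ.le_apply, hPk⟩

lemma diagonal {X : Type*} (v : ℕ → X → ℝ)
    (H : ∀ (p q : ℚ), p < q → ∀ e : ℕ → ℕ, StrictMono e →
      ¬ IsIndependentSeq (fun k => {x | v (e k) x < (p : ℝ)})
        (fun k => {x | (q : ℝ) < v (e k) x})) :
    ∃ d : ℕ → ℕ, StrictMono d ∧ ∀ (p q : ℚ), p < q → ∀ x : X,
      ¬ ((∃ᶠ k in Filter.atTop, v (d k) x < (p : ℝ)) ∧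
         (∃ᶠ k in Filter.atTop, (q : ℝ) < v (d k) x)) := by
  classical
  set E : ℕ → ℚ × ℚ := fun i => (Denumerable.eqv (ℚ × ℚ)).symm i with hE
  set NoAlt : ℕ → (ℕ → ℕ) → Prop := fun i e =>
    (E i).1 < (E i).2 → ∀ x : X,
      ¬ ((∃ᶠ k in Filter.atTop, v (e k) x < ((E i).1 : ℝ)) ∧
         (∃ᶠ k in Filter.atTop, ((E i).2 : ℝ) < v (e k) x)) with hNoAlt
  have noalt_comp : ∀ i e (ψ : ℕ → ℕ), StrictMono ψ → NoAlt i e → NoAlt i (e ∘ ψ) := by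
    intro i e ψ hψ hno hpq x hx
    exact hno hpq x ⟨freq_comp hψ hx.1, freq_comp hψ hx.2⟩
  have hstep : ∀ (i : ℕ) (e : ℕ → ℕ), StrictMono e →
      ∃ ψ : ℕ → ℕ, StrictMono ψ ∧ NoAlt i (e ∘ ψ) := by
    intro i e he
    by_cases hpq : (E i).1 < (E i).2
    · obtain ⟨φ, hφ, hφno⟩ := rosenthal (fun n => {x : X | v (e n) x < ((E i).1 : ℝ)})
        (fun n => {x : X | ((E i).2 : ℝ) < v (e n) x}) (by
          rintro ⟨ψ, hψ, hind⟩
          exact H _ _ hpq (e ∘ ψ) (he.comp hψ) hind)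
      exact ⟨φ, hφ, fun _ x hx => hφno x hx⟩
    · exact ⟨id, strictMono_id, fun hc => absurd hc hpq⟩
  set St := {p : ℕ × (ℕ → ℕ) // StrictMono p.2 ∧ ∀ j < p.1, NoAlt j p.2} with hSt
  set next : St → St := fun st =>
    ⟨(st.1.1 + 1, st.1.2 ∘ (hstep st.1.1 st.1.2 st.2.1).choose), by
      refine ⟨st.2.1.comp (hstep st.1.1 st.1.2 st.2.1).choose_spec.1, ?_⟩
      intro j hj
      rcases Nat.lt_succ_iff_lt_or_eq.1 hj with hj | rfl
      · exact noalt_comp j st.1.2 _ (hstep st.1.1 st.1.2 st.2.1).choose_spec.1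
          (st.2.2 j hj)
      · exact (hstep st.1.1 st.1.2 st.2.1).choose_spec.2⟩ with hnext
  set c : ℕ → St := fun k => next^[k] ⟨(0, id), strictMono_id,
    fun j hj => absurd hj (Nat.not_lt_zero j)⟩ with hc
  have hc_succ : ∀ k, c (k+1) = next (c k) := by
    intro k
    rw [hc]
    exact Function.iterate_succ_apply' _ _ _
  have hc_fst : ∀ k, (c k).1.1 = k := by
    intro k
    induction k with
    | zero => rfl
    | succ k ih => rw [hc_succ k, hnext]; simp [ih]
  have hc_rel : ∀ k, ∃ ψ : ℕ → ℕ, StrictMono ψ ∧ (c (k+1)).1.2 = (c k).1.2 ∘ ψ := by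
    intro k
    rw [hc_succ k]
    exact ⟨_, (hstep (c k).1.1 (c k).1.2 (c k).2.1).choose_spec.1, rfl⟩
  have hσ : ∀ j k, j ≤ k → ∃ σ : ℕ → ℕ, StrictMono σ ∧ (c k).1.2 = (c j).1.2 ∘ σ := by
    intro j k hjk
    induction k with
    | zero =>
      rw [Nat.le_zero.1 hjk]
      exact ⟨id, strictMono_id, rfl⟩
    | succ k ih =>
      rcases Nat.lt_succ_iff_lt_or_eq.1 (Nat.lt_succ_of_le hjk) with hj | rfl
      · obtain ⟨σ, hσ1, hσ2⟩ := ih (Nat.lt_succ_iff.1 hj)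
        obtain ⟨ψ, hψ1, hψ2⟩ := hc_rel k
        exact ⟨σ ∘ ψ, hσ1.comp hψ1, by rw [hψ2, hσ2]; rfl⟩
      · exact ⟨id, strictMono_id, rfl⟩
  set d : ℕ → ℕ := fun k => (c k).1.2 k with hd
  have hdmono : StrictMono d := by
    apply strictMono_nat_of_lt_succ
    intro k
    obtain ⟨ψ, hψ1, hψ2⟩ := hc_rel k
    rw [hd]
    simp only
    rw [hψ2]
    calc (c k).1.2 k < (c k).1.2 (k+1) := (c k).2.1 (Nat.lt_succ_self k)
      _ ≤ (c k).1.2 (ψ (k+1)) := (c k).2.1.monotone hψ1.le_apply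
  refine ⟨d, hdmono, ?_⟩
  intro p q hpq x hx
  set j : ℕ := Denumerable.eqv (ℚ × ℚ) (p, q) with hj
  have hEj : E j = (p, q) := by
    rw [hE, hj]
    simp
  have hno : NoAlt j (c (j+1)).1.2 := (c (j+1)).2.2 j (by rw [hc_fst]; omega)
  have htrans : ∀ (P : ℝ → Prop), (∃ᶠ k in Filter.atTop, P (v (d k) x)) →
      (∃ᶠ m in Filter.atTop, P (v ((c (j+1)).1.2 m) x)) := by
    intro P hP
    rw [Filter.frequently_atTop] at hP ⊢
    intro a
    obtain ⟨k, hk, hPk⟩ := hP (max a (j+1))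
    obtain ⟨σ, hσ1, hσ2⟩ := hσ (j+1) k (le_trans (le_max_right _ _) hk)
    refine ⟨σ k, ?_, ?_⟩
    · calc a ≤ k := le_trans (le_max_left _ _) hk
        _ ≤ σ k := hσ1.le_apply
    · have : d k = (c (j+1)).1.2 (σ k) := by rw [hd]; simp only; rw [hσ2]; rfl
      rw [← this]
      exact hPk
  simp only [hNoAlt, hEj] at hno
  exact hno hpq x ⟨htrans (fun r => r < (p : ℝ)) hx.1, htrans (fun r => (q : ℝ) < r) hx.2⟩


end RosNW

namespace RosNW

/-! ### Baire category : pointwise Cauchy sequences are fragmented families -/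

lemma fragmented_of_cauchy {X : Type*} [TopologicalSpace X] [CompactSpace X] [T2Space X]
    (g : ℕ → C(X, ℝ))
    (hc : ∀ x : X, ∀ δ : ℝ, 0 < δ → ∃ N, ∀ m ≥ N, ∀ n ≥ N, |g m x - g n x| ≤ δ) :
    IsFragmentedFamily (Set.range g) := by
  intro A hA ε hε
  classical
  set δ : ℝ := ε / 5 with hδdef
  have hδ : 0 < δ := by positivity
  set B : Set X := closure A with hB
  have hBcl : IsClosed B := isClosed_closure
  have hBcomp : IsCompact B := hBcl.isCompact
  have hBne : B.Nonempty := hA.closure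
  haveI : Nonempty B := hBne.to_subtype
  haveI : CompactSpace B := isCompact_iff_compactSpace.mp hBcomp
  set T : ℕ → Set B := fun N =>
    ⋂ (m : ℕ) (_ : N ≤ m) (n : ℕ) (_ : N ≤ n), {y : B | |g m y.1 - g n y.1| ≤ δ} with hT
  have hTclosed : ∀ N, IsClosed (T N) := by
    intro N
    apply isClosed_iInter; intro m
    apply isClosed_iInter; intro _
    apply isClosed_iInter; intro n
    apply isClosed_iInter; intro _
    have hcont : Continuous fun y : B => |g m y.1 - g n y.1| :=
      (((g m).continuous.comp continuous_subtype_val).sub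
        ((g n).continuous.comp continuous_subtype_val)).abs
    exact isClosed_le hcont continuous_const
  have hTcover : ⋃ N, T N = Set.univ := by
    apply Set.eq_univ_of_forall
    intro y
    obtain ⟨N, hN⟩ := hc y.1 δ hδ
    refine Set.mem_iUnion.2 ⟨N, ?_⟩
    rw [hT]
    simp only [Set.mem_iInter, Set.mem_setOf_eq]
    intro m hm n hn
    exact hN m hm n hn
  obtain ⟨N, hNint⟩ := nonempty_interior_of_iUnion_of_closed hTclosed hTcover
  obtain ⟨y₀, hy₀⟩ := hNint
  obtain ⟨V, hVopen, hVeq⟩ := isOpen_induced_iff.1 (isOpen_interior : IsOpen (interior (T N)))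
  have hy₀V : (y₀ : X) ∈ V := by
    rw [← Set.mem_preimage, hVeq]
    exact hy₀
  have hVT : ∀ y : B, (y : X) ∈ V → y ∈ T N := by
    intro y hy
    have : y ∈ interior (T N) := by
      rw [← hVeq]
      exact hy
    exact interior_subset this
  set W : Set X := V ∩ ⋂ k ∈ Finset.range (N+1), {z | |g k z - g k y₀.1| < δ} with hW
  have hWopen : IsOpen W := by
    apply hVopen.inter
    apply isOpen_biInter_finset
    intro k _
    have hcont : Continuous fun z : X => |g k z - g k y₀.1| :=
      ((g k).continuous.sub continuous_const).abs
    exact isOpen_lt hcont continuous_const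
  have hy₀W : (y₀ : X) ∈ W := by
    refine ⟨hy₀V, ?_⟩
    simp only [Set.mem_iInter, Set.mem_setOf_eq]
    intro k _
    simpa using hδ
  have hWA : (W ∩ A).Nonempty := by
    have hcl : (y₀ : X) ∈ closure A := y₀.2
    rw [mem_closure_iff] at hcl
    exact hcl W hWopen hy₀W
  refine ⟨W, hWopen, hWA, ?_⟩
  rintro f ⟨k, rfl⟩
  -- key estimate
  have hkey : ∀ z ∈ W ∩ A, ∀ w ∈ W ∩ A, dist (g k z) (g k w) ≤ 4 * δ := by
    have hWprop : ∀ z ∈ W ∩ A, (∀ m ≥ N, ∀ n ≥ N, |g m z - g n z| ≤ δ) ∧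
        (∀ j ≤ N, |g j z - g j y₀.1| < δ) := by
      intro z hz
      have hzB : z ∈ B := subset_closure hz.2
      have hzT : (⟨z, hzB⟩ : B) ∈ T N := hVT _ hz.1.1
      rw [hT] at hzT
      simp only [Set.mem_iInter, Set.mem_setOf_eq] at hzT
      refine ⟨fun m hm n hn => hzT m hm n hn, ?_⟩
      intro j hj
      have := hz.1.2
      simp only [Set.mem_iInter, Set.mem_setOf_eq] at this
      exact this j (Finset.mem_range.2 (Nat.lt_succ_of_le hj))
    intro z hz w hw
    obtain ⟨hz1, hz2⟩ := hWprop z hz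
    obtain ⟨hw1, hw2⟩ := hWprop w hw
    rw [Real.dist_eq]
    rcases le_or_gt k N with hk | hk
    · -- |g k z - g k w| ≤ |g k z - g k y₀| + |g k y₀ - g k w| < 2δ
      have h1 := hz2 k hk
      have h2 := hw2 k hk
      have : |g k z - g k w| ≤ |g k z - g k y₀.1| + |g k w - g k y₀.1| := by
        have := abs_sub_abs_le_abs_sub (g k z - g k y₀.1) (g k w - g k y₀.1)
        have heq : (g k z - g k y₀.1) - (g k w - g k y₀.1) = g k z - g k w := by ring
        calc |g k z - g k w| = |(g k z - g k y₀.1) - (g k w - g k y₀.1)| := by rw [heq]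
          _ ≤ |g k z - g k y₀.1| + |g k w - g k y₀.1| := abs_sub _ _
      nlinarith [abs_nonneg (g k z - g k w)]
    · -- k > N
      have h1 := hz1 k (le_of_lt hk) N le_rfl
      have h2 := hz2 N le_rfl
      have h3 := hw2 N le_rfl
      have h4 := hw1 k (le_of_lt hk) N le_rfl
      have hsum : |g k z - g k w| ≤ |g k z - g N z| + |g N z - g N y₀.1| +
          |g N y₀.1 - g N w| + |g N w - g k w| := by
        calc |g k z - g k w| = |(g k z - g N z) + (g N z - g N y₀.1) +
            (g N y₀.1 - g N w) + (g N w - g k w)| := by ring_nf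
          _ ≤ _ := by
            apply (abs_add_le _ _).trans
            gcongr
            apply (abs_add_le _ _).trans
            gcongr
            exact abs_add_le _ _
      have h3' : |g N y₀.1 - g N w| < δ := by rw [abs_sub_comm]; exact h3
      have h4' : |g N w - g k w| ≤ δ := by rw [abs_sub_comm]; exact h4
      linarith
  have hdiam : Metric.diam (⇑(g k) '' (W ∩ A)) ≤ 4 * δ := by
    apply Metric.diam_le_of_forall_dist_le (by positivity)
    rintro u ⟨z, hz, rfl⟩ v ⟨w, hw, rfl⟩
    exact hkey z hz w hw
  calc Metric.diam (⇑(g k) '' (W ∩ A)) ≤ 4 * δ := hdiam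
    _ < ε := by rw [hδdef]; linarith


end RosNW

/-- If `K ⊆ [0,1]^Γ` is compact and for all reals `p < q` the family of disjoint pairs
`({x | x_α < p}, {x | x_α > q})`, `α ∈ Γ`, contains no independent sequence, then the family
of coordinate projections is eventually fragmented, uniformly bounded and separates the
points of `K`. -/
theorem coordinate_projections_eventuallyFragmented
    {Γ : Type*} (K : Set (Γ → unitInterval)) (hcomp : IsCompact K)
    (h : ∀ p q : ℝ, p < q →
      ¬ ∃ φ : ℕ → Γ, IsIndependentSeq
          (fun n => {x : K | (x.1 (φ n) : ℝ) < p})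
          (fun n => {x : K | (x.1 (φ n) : ℝ) > q})) :
    IsEventuallyFragmented (Set.range (coordFun K)) ∧
      (∃ M : ℝ, ∀ f ∈ Set.range (coordFun K), ∀ x : K, |f x| ≤ M) ∧
      (∀ x y : K, x ≠ y → ∃ f ∈ Set.range (coordFun K), f x ≠ f y) := by
  haveI : CompactSpace ↥K := isCompact_iff_compactSpace.mp hcomp
  haveI : CompactSpace ↥K := isCompact_iff_compactSpace.mp hcomp
  refine ⟨?_, ⟨1, ?_⟩, ?_⟩
  · -- eventually fragmented
    intro f hf
    choose α hα using hf
    have H : ∀ (p q : ℚ), p < q → ∀ e : ℕ → ℕ, StrictMono e →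
        ¬ IsIndependentSeq (fun k => {x : ↥K | (fun n (x : ↥K) => f n x) (e k) x < (p : ℝ)})
          (fun k => {x : ↥K | (q : ℝ) < (fun n (x : ↥K) => f n x) (e k) x}) := by
      intro p q hpq e he hind
      apply h p q (by exact_mod_cast hpq)
      refine ⟨fun n => α (e n), ?_⟩
      have h1 : (fun k => {x : ↥K | (fun n (x : ↥K) => f n x) (e k) x < (p : ℝ)}) =
          fun n => {x : ↥K | (x.1 (α (e n)) : ℝ) < (p : ℝ)} := by
        funext k
        show {x : ↥K | (f (e k)) x < (p : ℝ)} = _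
        rw [← hα (e k)]
        rfl
      have h2 : (fun k => {x : ↥K | (q : ℝ) < (fun n (x : ↥K) => f n x) (e k) x}) =
          fun n => {x : ↥K | (x.1 (α (e n)) : ℝ) > (q : ℝ)} := by
        funext k
        show {x : ↥K | (q : ℝ) < (f (e k)) x} = _
        rw [← hα (e k)]
        rfl
      rw [h1, h2] at hind
      exact hind
    obtain ⟨d, hd, hno⟩ := RosNW.diagonal (fun n (x : ↥K) => f n x) H
    refine ⟨d, hd, ?_⟩
    apply RosNW.fragmented_of_cauchy
    intro x δ hδ
    set u : ℕ → ℝ := fun k => f (d k) x with hu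
    have hb1 : ∀ k, u k ≤ 1 := by
      intro k
      rw [hu]
      simp only
      rw [← hα (d k)]
      exact (x.1 (α (d k))).2.2
    have hb0 : ∀ k, 0 ≤ u k := by
      intro k
      rw [hu]
      simp only
      rw [← hα (d k)]
      exact (x.1 (α (d k))).2.1
    have hbdd : Filter.IsBoundedUnder (· ≤ ·) Filter.atTop u :=
      Filter.isBoundedUnder_of ⟨1, hb1⟩
    have hbdd' : Filter.IsBoundedUnder (· ≥ ·) Filter.atTop u :=
      Filter.isBoundedUnder_of ⟨0, hb0⟩
    have heq : Filter.liminf u Filter.atTop = Filter.limsup u Filter.atTop := by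
      by_contra hne
      have hlt : Filter.liminf u Filter.atTop < Filter.limsup u Filter.atTop :=
        lt_of_le_of_ne (Filter.liminf_le_limsup hbdd hbdd') hne
      obtain ⟨p, hp1, hp2⟩ := exists_rat_btwn hlt
      obtain ⟨q, hq1, hq2⟩ := exists_rat_btwn hp2
      have hpq : p < q := by exact_mod_cast hq1
      apply hno p q hpq x
      constructor
      · exact Filter.frequently_lt_of_liminf_lt hbdd.isCoboundedUnder_ge hp1
      · exact Filter.frequently_lt_of_lt_limsup hbdd'.isCoboundedUnder_le hq2
    have htend : Filter.Tendsto u Filter.atTop (nhds (Filter.liminf u Filter.atTop)) :=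
      tendsto_of_liminf_eq_limsup rfl heq.symm hbdd hbdd'
    rw [Metric.tendsto_atTop] at htend
    obtain ⟨N, hN⟩ := htend (δ/2) (by positivity)
    refine ⟨N, fun m hm n hn => ?_⟩
    have h1 := hN m hm
    have h2 := hN n hn
    rw [Real.dist_eq] at h1 h2
    have h3 := abs_sub_le (u m) (Filter.liminf u Filter.atTop) (u n)
    have h4 : |Filter.liminf u Filter.atTop - u n| = |u n - Filter.liminf u Filter.atTop| :=
      abs_sub_comm _ _
    show |u m - u n| ≤ δ
    linarith
  · -- uniformly bounded
    rintro f ⟨γ, rfl⟩ x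
    have h1 : (0 : ℝ) ≤ (x.1 γ : ℝ) := (x.1 γ).2.1
    have h2 : (x.1 γ : ℝ) ≤ 1 := (x.1 γ).2.2
    rw [abs_le]
    constructor
    · show (-1 : ℝ) ≤ (x.1 γ : ℝ)
      linarith
    · exact h2
  · -- separates points
    intro x y hxy
    have hne : x.1 ≠ y.1 := fun hc => hxy (Subtype.ext hc)
    obtain ⟨γ, hγ⟩ := Function.ne_iff.1 hne
    refine ⟨coordFun K γ, ⟨γ, rfl⟩, ?_⟩
    intro hc
    apply hγ
    exact Subtype.ext hc
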